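/- Let (λ_k)_{k ∈ ℤ₊} be the Lebesgue constants of univariate Lagrange interpolation operators I_k at nested nodes, and suppose λ_k ≤ (k+1)^θ for all k for some θ ≥ 1. Then for every finite lower (downward closed) set Λ ⊂ F, the Lebesgue constant of the tensorized sparse interpolation operator I_Λ = Σ_{s ∈ Λ} ⊗_j (I_{s_j} - I_{s_j - 1}) satisfies L_Λ ≤ |Λ|^{θ+1}. -/

import Mathlib

/-- The `j`-th Lagrange fundamental polynomial for the nodes `ξ_0, …, ξ_k`. -/
noncomputable def lagb (ξ : ℕ → ℝ) (k j : ℕ) (t : ℝ) : ℝ :=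
  ∏ i ∈ (Finset.range (k + 1)).erase j, (t - ξ i) / (ξ j - ξ i)

/-- The univariate Lagrange interpolation operator `I_k` applied in coordinate `j`
of a function on `ℝ^ℕ`. -/
noncomputable def Iuni (ξ : ℕ → ℝ) (k j : ℕ) (f : (ℕ → ℝ) → ℝ) : (ℕ → ℝ) → ℝ :=
  fun y => ∑ i ∈ Finset.range (k + 1), f (Function.update y j (ξ i)) * lagb ξ k i (y j)

/-- The difference operator `Δ_k = I_k - I_{k-1}` (with `I_{-1} = 0`, so `Δ_0 = I_0`)
applied in coordinate `j`. -/
noncomputable def deltaCoord (ξ : ℕ → ℝ) (k j : ℕ) (f : (ℕ → ℝ) → ℝ) : (ℕ → ℝ) → ℝ :=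
  if k = 0 then Iuni ξ 0 j f else Iuni ξ k j f - Iuni ξ (k - 1) j f

/-- The tensorized difference operator `Δ_s = ⊗_j Δ_{s_j}` (the commuting coordinatewise
difference operators composed over the support of the multi-index `s`). -/
noncomputable def deltaTensor (ξ : ℕ → ℝ) (s : ℕ →₀ ℕ) (f : (ℕ → ℝ) → ℝ) : (ℕ → ℝ) → ℝ :=
  (s.support.sort (· ≤ ·)).foldr (fun j g => deltaCoord ξ (s j) j g) f

open Finset

lemma inc_lemma {σ : ℝ} (hσ : 1 ≤ σ) {x y b : ℝ} (hx : 0 ≤ x) (hxy : x ≤ y) (hb : 0 ≤ b) :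
    (x + b) ^ σ - x ^ σ ≤ (y + b) ^ σ - y ^ σ := by
  have hy : 0 ≤ y := hx.trans hxy
  rcases eq_or_lt_of_le (by linarith : (0:ℝ) ≤ (y - x) + b) with h | h
  · have h2 : b = 0 := by linarith [sub_nonneg.2 hxy]
    have h1 : y = x := by linarith [sub_nonneg.2 hxy]
    simp [h1, h2]
  · have hcpos : 0 < y - x + b := h
    set lam := (y - x) / (y - x + b) with hlam
    set mu := b / (y - x + b) with hmu
    have hlam0 : 0 ≤ lam := div_nonneg (by linarith) hcpos.le
    have hmu0 : 0 ≤ mu := div_nonneg hb hcpos.le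
    have hsum : lam + mu = 1 := by
      rw [hlam, hmu, ← add_div, div_self hcpos.ne']
    have hconv := convexOn_rpow hσ
    have e1 : lam • x + mu • (y + b) = x + b := by
      rw [smul_eq_mul, smul_eq_mul, hlam, hmu]
      field_simp
      ring
    have e2 : mu • x + lam • (y + b) = y := by
      rw [smul_eq_mul, smul_eq_mul, hlam, hmu]
      field_simp
      ring
    have h1 := hconv.2 (Set.mem_Ici.2 hx) (Set.mem_Ici.2 (by linarith : (0:ℝ) ≤ y + b)) hlam0 hmu0 hsum
    have h2 := hconv.2 (Set.mem_Ici.2 hx) (Set.mem_Ici.2 (by linarith : (0:ℝ) ≤ y + b)) hmu0 hlam0 (by linarith)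
    rw [e1] at h1
    rw [e2] at h2
    simp only [smul_eq_mul] at h1 h2
    have h3 := add_le_add h1 h2
    have e3 : lam * x ^ σ + mu * (y + b) ^ σ + (mu * x ^ σ + lam * (y + b) ^ σ)
        = (lam + mu) * (x ^ σ + (y + b) ^ σ) := by ring
    rw [e3, hsum, one_mul] at h3
    linarith

lemma numeric_lemma {σ : ℝ} (hσ : 1 ≤ σ) (n : ℕ → ℕ) :
    ∀ M : ℕ, (∀ k < M, n (k + 1) ≤ n k) →
      ∑ k ∈ range (M + 1), (((k:ℝ) + 1) ^ σ - (k:ℝ) ^ σ) * (n k : ℝ) ^ σ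
        ≤ (∑ k ∈ range (M + 1), (n k : ℝ)) ^ σ := by
  intro M
  induction M with
  | zero =>
    intro _
    simp [Real.zero_rpow (by linarith : σ ≠ 0), Real.one_rpow]
  | succ M ih =>
    intro hmono
    have hb : (0:ℝ) ≤ (n (M+1) : ℝ) := Nat.cast_nonneg _
    set b : ℝ := (n (M+1) : ℝ) with hbdef
    set A : ℝ := ∑ k ∈ range (M + 1), (n k : ℝ) with hA
    have hA0 : 0 ≤ A := Finset.sum_nonneg fun k _ => Nat.cast_nonneg _
    have hmono' : ∀ k ≤ M, n (M+1) ≤ n k := by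
      intro k hk
      have key : ∀ d : ℕ, k + d ≤ M + 1 → n (k + d) ≤ n k := by
        intro d
        induction d with
        | zero => simp
        | succ d ihd =>
          intro hle
          exact le_trans (hmono (k+d) (by omega)) (ihd (by omega))
      have := key (M + 1 - k) (by omega)
      rwa [Nat.add_sub_cancel' (by omega)] at this
    have hAb : ((M:ℝ) + 1) * b ≤ A := by
      rw [hA, hbdef]
      calc ((M:ℝ)+1) * (n (M+1):ℝ) = ∑ _k ∈ range (M+1), (n (M+1) : ℝ) := by
            simp [mul_comm]
        _ ≤ ∑ k ∈ range (M+1), (n k : ℝ) := by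
            apply Finset.sum_le_sum
            intro k hk
            exact_mod_cast hmono' k (Nat.lt_succ_iff.mp (mem_range.mp hk))
    have key : (((M:ℝ)+1+1) ^ σ - ((M:ℝ)+1) ^ σ) * b ^ σ ≤ (A + b) ^ σ - A ^ σ := by
      have h1 : (((M:ℝ)+1) * b + b) ^ σ - (((M:ℝ)+1) * b) ^ σ ≤ (A + b) ^ σ - A ^ σ :=
        inc_lemma hσ (by positivity) hAb hb
      have e1 : (((M:ℝ)+1) * b + b) = ((M:ℝ)+1+1) * b := by ring
      rw [e1, Real.mul_rpow (by positivity) hb, Real.mul_rpow (by positivity) hb] at h1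
      linarith
    have ihM := ih (fun k hk => hmono k (by omega))
    rw [Finset.sum_range_succ, Finset.sum_range_succ (f := fun k => (n k : ℝ))]
    push_cast
    calc ∑ k ∈ range (M+1), (((k:ℝ) + 1) ^ σ - (k:ℝ) ^ σ) * (n k : ℝ) ^ σ
          + (((M:ℝ)+1+1) ^ σ - ((M:ℝ)+1) ^ σ) * b ^ σ
        ≤ A ^ σ + ((A + b) ^ σ - A ^ σ) := add_le_add ihM key
      _ = (A + b) ^ σ := by ring

noncomputable def Dfun (σ : ℝ) (k : ℕ) : ℝ := ((k:ℝ) + 1) ^ σ - (k:ℝ) ^ σ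

lemma Dfun_nonneg {σ : ℝ} (hσ : 1 ≤ σ) (k : ℕ) : 0 ≤ Dfun σ k := by
  have := Real.rpow_le_rpow (Nat.cast_nonneg k) (by linarith : (k:ℝ) ≤ (k:ℝ)+1) (by linarith : (0:ℝ) ≤ σ)
  simp [Dfun]; linarith

lemma erase_sub_single {N j : ℕ} (hj : j ≠ N) (s : ℕ →₀ ℕ) :
    Finsupp.erase N (s - Finsupp.single j 1) = Finsupp.erase N s - Finsupp.single j 1 := by
  ext a
  rcases eq_or_ne a N with rfl | ha
  · simp [Finsupp.erase_same, Finsupp.tsub_apply, Finsupp.single_apply, hj]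
  · simp [Finsupp.erase_ne ha, Finsupp.tsub_apply]

lemma comb_lemma {σ : ℝ} (hσ : 1 ≤ σ) :
    ∀ N : ℕ, ∀ Λ : Finset (ℕ →₀ ℕ),
      (∀ s ∈ Λ, ∀ j : ℕ, 0 < s j → s - Finsupp.single j 1 ∈ Λ) →
      (∀ s ∈ Λ, ∀ j, N ≤ j → s j = 0) →
      ∑ s ∈ Λ, ∏ j ∈ range N, Dfun σ (s j) ≤ (Λ.card : ℝ) ^ σ := by
  intro N
  induction N with
  | zero =>
    intro Λ _ _
    simp only [range_zero, prod_empty, Finset.sum_const, nsmul_eq_mul, mul_one]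
    rcases Nat.eq_zero_or_pos Λ.card with h | h
    · simp [h, Real.zero_rpow (by linarith : σ ≠ 0)]
    · have h1 : (1:ℝ) ≤ (Λ.card : ℝ) := by exact_mod_cast h
      calc (Λ.card : ℝ) = (Λ.card : ℝ) ^ (1:ℝ) := (Real.rpow_one _).symm
        _ ≤ (Λ.card : ℝ) ^ σ := Real.rpow_le_rpow_of_exponent_le h1 hσ
  | succ N ih =>
    intro Λ hlow hzero
    set M := Λ.sup (fun s => s N) with hM
    have hfib : ∀ s ∈ Λ, s N ∈ range (M + 1) := fun s hs =>
      mem_range.2 (Nat.lt_succ_of_le (Finset.le_sup (f := fun s => s N) hs))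
    set Λk : ℕ → Finset (ℕ →₀ ℕ) := fun k => (Λ.filter (fun s => s N = k)).image (Finsupp.erase N) with hΛk
    have hinjOn : ∀ k : ℕ, ∀ x ∈ Λ.filter (fun s => s N = k), ∀ y ∈ Λ.filter (fun s => s N = k),
        Finsupp.erase N x = Finsupp.erase N y → x = y := by
      intro k x hx y hy hxy
      rw [mem_filter] at hx hy
      ext a
      rcases eq_or_ne a N with rfl | ha
      · rw [hx.2, hy.2]
      · rw [← Finsupp.erase_ne ha (f := x), ← Finsupp.erase_ne ha (f := y), hxy]
    -- membership characterization
    have hmem : ∀ k, ∀ t, t ∈ Λk k ↔ ∃ s ∈ Λ, s N = k ∧ Finsupp.erase N s = t := by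
      intro k t
      simp only [hΛk, mem_image, mem_filter]
      constructor
      · rintro ⟨s, ⟨hs, hsk⟩, rfl⟩; exact ⟨s, hs, hsk, rfl⟩
      · rintro ⟨s, hs, hsk, rfl⟩; exact ⟨s, ⟨hs, hsk⟩, rfl⟩
    -- lower
    have hlowk : ∀ k, ∀ t ∈ Λk k, ∀ j : ℕ, 0 < t j → t - Finsupp.single j 1 ∈ Λk k := by
      intro k t ht j hj
      obtain ⟨s, hs, hsk, rfl⟩ := (hmem k t).1 ht
      have hjN : j ≠ N := by
        intro h; rw [h, Finsupp.erase_same] at hj; exact absurd hj (lt_irrefl 0)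
      have hsj : 0 < s j := by rwa [Finsupp.erase_ne hjN] at hj
      refine (hmem k _).2 ⟨s - Finsupp.single j 1, hlow s hs j hsj, ?_, ?_⟩
      · rw [Finsupp.tsub_apply, Finsupp.single_apply, if_neg hjN]
        simpa using hsk
      · exact erase_sub_single hjN s
    -- zero outside
    have hzerok : ∀ k, ∀ t ∈ Λk k, ∀ j, N ≤ j → t j = 0 := by
      intro k t ht j hjN
      obtain ⟨s, hs, hsk, rfl⟩ := (hmem k t).1 ht
      rcases eq_or_ne j N with rfl | hne
      · exact Finsupp.erase_same
      · rw [Finsupp.erase_ne hne]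
        exact hzero s hs j (by omega)
    -- nested
    have hnested : ∀ k, Λk (k + 1) ⊆ Λk k := by
      intro k t ht
      obtain ⟨s, hs, hsk, rfl⟩ := (hmem (k+1) t).1 ht
      have hpos : 0 < s N := by omega
      refine (hmem k _).2 ⟨s - Finsupp.single N 1, hlow s hs N hpos, ?_, ?_⟩
      · rw [Finsupp.tsub_apply, Finsupp.single_apply, if_pos rfl, hsk]
        omega
      · ext a
        rcases eq_or_ne a N with rfl | ha
        · simp [Finsupp.erase_same]
        · simp [Finsupp.erase_ne ha, Finsupp.tsub_apply, Finsupp.single_apply, Ne.symm ha]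
    -- card decomposition
    have hcard : Λ.card = ∑ k ∈ range (M+1), (Λk k).card := by
      rw [Finset.card_eq_sum_card_fiberwise hfib]
      refine Finset.sum_congr rfl fun k _ => ?_
      rw [hΛk]
      exact (Finset.card_image_of_injOn (fun x hx y hy => hinjOn k x hx y hy)).symm
    -- sum decomposition
    have hsum : ∑ s ∈ Λ, ∏ j ∈ range (N+1), Dfun σ (s j)
        = ∑ k ∈ range (M+1), Dfun σ k * ∑ t ∈ Λk k, ∏ j ∈ range N, Dfun σ (t j) := by
      rw [← Finset.sum_fiberwise_of_maps_to hfib (fun s => ∏ j ∈ range (N+1), Dfun σ (s j))]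
      refine Finset.sum_congr rfl fun k _ => ?_
      rw [Finset.mul_sum, hΛk, Finset.sum_image (fun x hx y hy => hinjOn k x hx y hy)]
      refine Finset.sum_congr rfl fun s hs => ?_
      rw [mem_filter] at hs
      rw [Finset.prod_range_succ, hs.2, mul_comm]
      congr 1
      refine Finset.prod_congr rfl fun j hj => ?_
      have hjne : j ≠ N := Nat.ne_of_lt (mem_range.1 hj)
      rw [Finsupp.erase_ne hjne]
    rw [hsum]
    have step1 : ∑ k ∈ range (M+1), Dfun σ k * ∑ t ∈ Λk k, ∏ j ∈ range N, Dfun σ (t j)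
        ≤ ∑ k ∈ range (M+1), Dfun σ k * ((Λk k).card : ℝ) ^ σ := by
      refine Finset.sum_le_sum fun k _ => ?_
      exact mul_le_mul_of_nonneg_left (ih (Λk k) (hlowk k) (hzerok k)) (Dfun_nonneg hσ k)
    have step2 : ∑ k ∈ range (M+1), Dfun σ k * ((Λk k).card : ℝ) ^ σ
        ≤ (∑ k ∈ range (M+1), ((Λk k).card : ℝ)) ^ σ := by
      have := numeric_lemma hσ (fun k => (Λk k).card) M
        (fun k _ => Finset.card_le_card (hnested k))
      simpa [Dfun] using this
    have hcast : (∑ k ∈ range (M+1), ((Λk k).card : ℝ)) = (Λ.card : ℝ) := by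
      rw [hcard]; push_cast; ring
    calc _ ≤ _ := step1
      _ ≤ _ := step2
      _ = (Λ.card : ℝ) ^ σ := by rw [hcast]

noncomputable def Bfun (θ : ℝ) (k : ℕ) : ℝ := ((k:ℝ) + 1) ^ θ + (k:ℝ) ^ θ

lemma Bfun_nonneg (θ : ℝ) (k : ℕ) : 0 ≤ Bfun θ k :=
  add_nonneg (Real.rpow_nonneg (by positivity) _) (Real.rpow_nonneg (Nat.cast_nonneg _) _)

lemma Bfun_le_Dfun {θ : ℝ} (hθ : 1 ≤ θ) (k : ℕ) : Bfun θ k ≤ Dfun (θ + 1) k := by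
  rcases Nat.eq_zero_or_pos k with rfl | hk
  · simp [Bfun, Dfun, Real.zero_rpow (by linarith : θ ≠ 0),
      Real.zero_rpow (by linarith : θ + 1 ≠ 0), Real.one_rpow]
  · have ha1 : (1:ℝ) ≤ (k:ℝ) := by exact_mod_cast hk
    set a : ℝ := (k:ℝ) with hadef
    have ha0 : (0:ℝ) < a := by linarith
    have e1 : (a + 1) ^ (θ + 1) = (a + 1) ^ θ * (a + 1) := Real.rpow_add_one (by linarith) θ
    have e2 : a ^ (θ + 1) = a ^ θ * a := Real.rpow_add_one ha0.ne' θ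
    have e3 : (a + 1) ^ θ = (a + 1) ^ (θ - 1) * (a + 1) := by
      rw [← Real.rpow_add_one (by linarith : a + 1 ≠ 0) (θ - 1), sub_add_cancel]
    have e4 : a ^ θ = a ^ (θ - 1) * a := by
      rw [← Real.rpow_add_one ha0.ne' (θ - 1), sub_add_cancel]
    have h5 : a ^ (θ - 1) ≤ (a + 1) ^ (θ - 1) :=
      Real.rpow_le_rpow ha0.le (by linarith) (by linarith)
    have h6 : (0:ℝ) ≤ a ^ (θ - 1) := Real.rpow_nonneg ha0.le _
    simp only [Bfun, Dfun, ← hadef]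
    rw [e1, e2, e3, e4]
    nlinarith [mul_nonneg (mul_nonneg ha0.le (by linarith : (0:ℝ) ≤ a + 1)) (sub_nonneg.2 h5), h6, ha0]

lemma list_prod_nonneg : ∀ l : List ℝ, (∀ x ∈ l, 0 ≤ x) → 0 ≤ l.prod := by
  intro l
  induction l with
  | nil => simp
  | cons a l ih =>
    intro h
    rw [List.prod_cons]
    exact mul_nonneg (h a (List.mem_cons_self)) (ih fun x hx => h x (List.mem_cons_of_mem a hx))

variable {ξ : ℕ → ℝ} {θ : ℝ}

lemma Iuni_bound (hξ : ∀ j, |ξ j| ≤ 1) (hθ : 1 ≤ θ)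
    (hleb : ∀ k : ℕ, ∀ t ∈ Set.Icc (-1 : ℝ) 1,
      ∑ j ∈ Finset.range (k + 1), |lagb ξ k j t| ≤ ((k : ℝ) + 1) ^ θ) (k j : ℕ) (g : (ℕ → ℝ) → ℝ) (C : ℝ) (hC : 0 ≤ C)
    (hg : ∀ y : ℕ → ℝ, (∀ i, |y i| ≤ 1) → |g y| ≤ C) :
    ∀ y : ℕ → ℝ, (∀ i, |y i| ≤ 1) → |Iuni ξ k j g y| ≤ ((k:ℝ) + 1) ^ θ * C := by
  intro y hy
  have hyj : y j ∈ Set.Icc (-1:ℝ) 1 := by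
    rcases abs_le.1 (hy j) with ⟨h1, h2⟩; exact ⟨h1, h2⟩
  calc |Iuni ξ k j g y| ≤ ∑ i ∈ Finset.range (k+1), |g (Function.update y j (ξ i)) * lagb ξ k i (y j)| :=
        Finset.abs_sum_le_sum_abs _ _
    _ ≤ ∑ i ∈ Finset.range (k+1), C * |lagb ξ k i (y j)| := by
        refine Finset.sum_le_sum fun i _ => ?_
        rw [abs_mul]
        refine mul_le_mul_of_nonneg_right ?_ (abs_nonneg _)
        refine hg _ fun i' => ?_
        rcases eq_or_ne i' j with rfl | h
        · rw [Function.update_self]; exact hξ i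
        · rw [Function.update_of_ne h]; exact hy i'
    _ = C * ∑ i ∈ Finset.range (k+1), |lagb ξ k i (y j)| := by rw [Finset.mul_sum]
    _ ≤ C * (((k:ℝ) + 1) ^ θ) := mul_le_mul_of_nonneg_left (hleb k (y j) hyj) hC
    _ = ((k:ℝ) + 1) ^ θ * C := mul_comm _ _

lemma delta_bound (hξ : ∀ j, |ξ j| ≤ 1) (hθ : 1 ≤ θ)
    (hleb : ∀ k : ℕ, ∀ t ∈ Set.Icc (-1 : ℝ) 1,
      ∑ j ∈ Finset.range (k + 1), |lagb ξ k j t| ≤ ((k : ℝ) + 1) ^ θ) (k j : ℕ) (g : (ℕ → ℝ) → ℝ) (C : ℝ) (hC : 0 ≤ C)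
    (hg : ∀ y : ℕ → ℝ, (∀ i, |y i| ≤ 1) → |g y| ≤ C) :
    ∀ y : ℕ → ℝ, (∀ i, |y i| ≤ 1) → |deltaCoord ξ k j g y| ≤ Bfun θ k * C := by
  intro y hy
  unfold deltaCoord
  rcases Nat.eq_zero_or_pos k with rfl | hk
  · simp only [if_pos rfl]
    have := Iuni_bound hξ hθ hleb 0 j g C hC hg y hy
    have hB : Bfun θ 0 = 1 := by
      simp [Bfun, Real.zero_rpow (by linarith : θ ≠ 0), Real.one_rpow]
    rw [hB, one_mul]
    simpa [Real.one_rpow] using this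
  · rw [if_neg hk.ne']
    have h1 := Iuni_bound hξ hθ hleb k j g C hC hg y hy
    have h2 := Iuni_bound hξ hθ hleb (k-1) j g C hC hg y hy
    have hcast : ((k - 1 : ℕ) : ℝ) + 1 = (k : ℝ) := by
      have : (k - 1) + 1 = k := Nat.succ_pred_eq_of_pos hk
      exact_mod_cast congrArg (Nat.cast : ℕ → ℝ) this
    rw [hcast] at h2
    have : |Iuni ξ k j g y - Iuni ξ (k-1) j g y| ≤ |Iuni ξ k j g y| + |Iuni ξ (k-1) j g y| :=
      abs_sub _ _
    simp only [Pi.sub_apply] at *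
    rw [Bfun]
    nlinarith [h1, h2, this]

lemma foldr_bound (hξ : ∀ j, |ξ j| ≤ 1) (hθ : 1 ≤ θ)
    (hleb : ∀ k : ℕ, ∀ t ∈ Set.Icc (-1 : ℝ) 1,
      ∑ j ∈ Finset.range (k + 1), |lagb ξ k j t| ≤ ((k : ℝ) + 1) ^ θ) (s : ℕ →₀ ℕ) (g : (ℕ → ℝ) → ℝ) (C : ℝ) (hC : 0 ≤ C)
    (hg : ∀ y : ℕ → ℝ, (∀ i, |y i| ≤ 1) → |g y| ≤ C) :
    ∀ l : List ℕ, ∀ y : ℕ → ℝ, (∀ i, |y i| ≤ 1) →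
      |l.foldr (fun j h => deltaCoord ξ (s j) j h) g y|
        ≤ (l.map (fun j => Bfun θ (s j))).prod * C := by
  intro l
  induction l with
  | nil => intro y hy; simpa using hg y hy
  | cons j l ih =>
    intro y hy
    have hprod : 0 ≤ (l.map (fun j => Bfun θ (s j))).prod := by
      apply list_prod_nonneg
      intro x hx
      obtain ⟨i, _, rfl⟩ := List.mem_map.1 hx
      exact Bfun_nonneg θ _
    have := delta_bound hξ hθ hleb (s j) j (l.foldr (fun j h => deltaCoord ξ (s j) j h) g)
      ((l.map (fun j => Bfun θ (s j))).prod * C) (mul_nonneg hprod hC) ih y hy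
    simpa [List.foldr_cons, List.map_cons, List.prod_cons, mul_assoc] using this

lemma deltaTensor_bound (hξ : ∀ j, |ξ j| ≤ 1) (hθ : 1 ≤ θ)
    (hleb : ∀ k : ℕ, ∀ t ∈ Set.Icc (-1 : ℝ) 1,
      ∑ j ∈ Finset.range (k + 1), |lagb ξ k j t| ≤ ((k : ℝ) + 1) ^ θ) (s : ℕ →₀ ℕ) (f : (ℕ → ℝ) → ℝ)
    (hf : ∀ y : ℕ → ℝ, (∀ i, |y i| ≤ 1) → |f y| ≤ 1) :
    ∀ y : ℕ → ℝ, (∀ i, |y i| ≤ 1) →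
      |deltaTensor ξ s f y| ≤ ∏ j ∈ s.support, Bfun θ (s j) := by
  intro y hy
  have h := foldr_bound hξ hθ hleb s f 1 zero_le_one hf (s.support.sort (· ≤ ·)) y hy
  rw [mul_one] at h
  unfold deltaTensor
  refine h.trans_eq ?_
  rw [← Finset.prod_map_toList]
  exact List.Perm.prod_eq (List.Perm.map _ (Finset.sort_perm_toList _ _))



theorem stmt11 (ξ : ℕ → ℝ) (hξ : ∀ j, |ξ j| ≤ 1) (hinj : Function.Injective ξ)
    (θ : ℝ) (hθ : 1 ≤ θ)
    (hleb : ∀ k : ℕ, ∀ t ∈ Set.Icc (-1 : ℝ) 1,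
      ∑ j ∈ Finset.range (k + 1), |lagb ξ k j t| ≤ ((k : ℝ) + 1) ^ θ)
    (Λ : Finset (ℕ →₀ ℕ)) (hΛ : Λ.Nonempty)
    (hlow : ∀ s ∈ Λ, ∀ j : ℕ, 0 < s j → s - Finsupp.single j 1 ∈ Λ)
    (f : (ℕ → ℝ) → ℝ) (hf : ∀ y : ℕ → ℝ, (∀ j, |y j| ≤ 1) → |f y| ≤ 1) :
    ∀ y : ℕ → ℝ, (∀ j, |y j| ≤ 1) →
      |∑ s ∈ Λ, deltaTensor ξ s f y| ≤ (Λ.card : ℝ) ^ (θ + 1) := by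
  intro y hy
  set N : ℕ := (Λ.sup fun s => s.support.sup id) + 1 with hN
  have hzero : ∀ s ∈ Λ, ∀ j, N ≤ j → s j = 0 := by
    intro s hs j hj
    by_contra h
    have hmem : j ∈ s.support := Finsupp.mem_support_iff.2 h
    have h1 : j ≤ s.support.sup id := Finset.le_sup (f := id) hmem
    have h2 : s.support.sup id ≤ Λ.sup fun s => s.support.sup id :=
      Finset.le_sup (f := fun s => s.support.sup id) hs
    omega
  have hsupp : ∀ s ∈ Λ, s.support ⊆ Finset.range N := by
    intro s hs j hj
    rw [Finset.mem_range]
    by_contra h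
    exact (Finsupp.mem_support_iff.1 hj) (hzero s hs j (by omega))
  calc |∑ s ∈ Λ, deltaTensor ξ s f y| ≤ ∑ s ∈ Λ, |deltaTensor ξ s f y| :=
        Finset.abs_sum_le_sum_abs _ _
    _ ≤ ∑ s ∈ Λ, ∏ j ∈ s.support, Bfun θ (s j) :=
        Finset.sum_le_sum fun s _ => deltaTensor_bound hξ hθ hleb s f hf y hy
    _ ≤ ∑ s ∈ Λ, ∏ j ∈ s.support, Dfun (θ + 1) (s j) :=
        Finset.sum_le_sum fun s _ => Finset.prod_le_prod
          (fun j _ => Bfun_nonneg θ _) (fun j _ => Bfun_le_Dfun hθ _)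
    _ = ∑ s ∈ Λ, ∏ j ∈ Finset.range N, Dfun (θ + 1) (s j) := by
        refine Finset.sum_congr rfl fun s hs => ?_
        refine Finset.prod_subset (hsupp s hs) fun j _ hj => ?_
        rw [Finsupp.notMem_support_iff.1 hj]
        simp [Dfun, Real.zero_rpow (by linarith : θ + 1 ≠ 0), Real.one_rpow]
    _ ≤ (Λ.card : ℝ) ^ (θ + 1) := comb_lemma (by linarith : 1 ≤ θ + 1) N Λ hlow hzero
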